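/- Let X be a real normed space, let Λ : X → X* be bounded linear, self-adjoint and positive semi-definite, and let F : X → ℝ be Gâteaux differentiable with Λ-firmly Lipschitz Gâteaux derivative DF. Then for all x, z ∈ X: F(x) − F(z) − ⟨DF(z), x − z⟩ ≤ (1/2) ‖z − x‖_Λ². -/

import Mathlib

theorem stmt5 {X : Type*} [NormedAddCommGroup X] [NormedSpace ℝ X]
    (Λ : X →L[ℝ] StrongDual ℝ X)
    (hΛsa : ∀ x z : X, Λ x z = Λ z x)
    (hΛpsd : ∀ x : X, 0 ≤ Λ x x)
    (F : X → ℝ) (DF : X → StrongDual ℝ X)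
    (hGateaux : ∀ x h : X, HasDerivAt (fun t : ℝ => F (x + t • h)) (DF x h) 0)
    (hfirm : ∀ x z h : X,
      (DF z - DF x) h ≤ Real.sqrt (Λ (x - z) (x - z)) * Real.sqrt (Λ h h)) :
    ∀ x z : X,
      F x - F z - DF z (x - z) ≤ (1 / 2) * Real.sqrt (Λ (z - x) (z - x)) ^ 2 := by
  intro x z
  set h := x - z with hh
  set c : ℝ := Λ h h with hc
  have hc0 : 0 ≤ c := hΛpsd h
  -- derivative of g(t) = F (z + t • h) at every point
  have hg : ∀ t : ℝ, HasDerivAt (fun t : ℝ => F (z + t • h)) (DF (z + t • h) h) t := by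
    intro t₀
    have hshift : HasDerivAt (fun t : ℝ => t - t₀) 1 t₀ := by
      simpa using (hasDerivAt_id t₀).sub_const t₀
    have hbase : HasDerivAt (fun t : ℝ => F (z + t₀ • h + t • h)) (DF (z + t₀ • h) h)
        (t₀ - t₀) := by rw [sub_self]; exact hGateaux (z + t₀ • h) h
    have hcomp := HasDerivAt.comp (h := fun t : ℝ => t - t₀) t₀ hbase hshift
    have : (fun t : ℝ => F (z + t₀ • h + (t - t₀) • h)) = fun t : ℝ => F (z + t • h) := by
      funext t
      congr 1
      module
    simp only [Function.comp_def] at hcomp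
    rw [this] at hcomp
    simpa using hcomp
  -- the auxiliary function
  set φ : ℝ → ℝ := fun t => F (z + t • h) - t * DF z h - t ^ 2 * (c / 2) with hφ
  have hφ' : ∀ t : ℝ, HasDerivAt φ (DF (z + t • h) h - DF z h - t * c) t := by
    intro t
    have h1 : HasDerivAt (fun t : ℝ => t * DF z h) (DF z h) t := by
      simpa using (hasDerivAt_id t).mul_const (DF z h)
    have h2 : HasDerivAt (fun t : ℝ => t ^ 2 * (c / 2)) (t * c) t := by
      have := (hasDerivAt_pow 2 t).mul_const (c / 2)
      refine this.congr_deriv ?_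
      ring
    exact (hg t).sub h1 |>.sub h2
  -- φ' ≤ 0 on [0, ∞)
  have hderiv_nonpos : ∀ t : ℝ, 0 ≤ t → DF (z + t • h) h - DF z h - t * c ≤ 0 := by
    intro t ht
    have key : (DF (z + t • h) - DF z) h ≤
        Real.sqrt (Λ (z - (z + t • h)) (z - (z + t • h))) * Real.sqrt (Λ h h) :=
      hfirm z (z + t • h) h
    have e1 : z - (z + t • h) = (-t) • h := by module
    have e2 : (Λ ((-t) • h)) ((-t) • h) = t ^ 2 * c := by
      simp [hc]
      ring
    rw [e1, e2] at key
    have e3 : Real.sqrt (t ^ 2 * c) = t * Real.sqrt c := by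
      rw [Real.sqrt_mul (sq_nonneg t), Real.sqrt_sq ht]
    rw [e3] at key
    have e4 : t * Real.sqrt c * Real.sqrt (Λ h h) = t * c := by
      rw [← hc, mul_assoc, Real.mul_self_sqrt hc0]
    rw [e4] at key
    have : DF (z + t • h) h - DF z h ≤ t * c := by
      simpa [ContinuousLinearMap.sub_apply] using key
    linarith
  -- φ is antitone on [0,1]
  have hanti : AntitoneOn φ (Set.Icc (0 : ℝ) 1) := by
    apply antitoneOn_of_deriv_nonpos (convex_Icc 0 1)
    · exact fun t _ => ((hφ' t).continuousAt).continuousWithinAt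
    · intro t ht
      exact ((hφ' t).differentiableAt).differentiableWithinAt
    · intro t ht
      rw [interior_Icc] at ht
      rw [(hφ' t).deriv]
      exact hderiv_nonpos t ht.1.le
  have h10 : φ 1 ≤ φ 0 := hanti (by norm_num) (by norm_num) (by norm_num)
  have e0 : φ 0 = F z := by simp [hφ]
  have e1 : φ 1 = F x - DF z h - c / 2 := by
    simp [hφ, hh]
  rw [e0, e1] at h10
  have eR : Real.sqrt (Λ (z - x) (z - x)) ^ 2 = c := by
    have : z - x = -h := by rw [hh]; abel
    rw [this]
    have : (Λ (-h)) (-h) = c := by simp [hc]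
    rw [this, Real.sq_sqrt hc0]
  rw [eR]
  linarith
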